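/- Let f : ℝ^{d×d} → ℝ be defined on symmetric matrices, and let b > 1, λ > 0, n, d ∈ ℕ with d < n, and Σ a positive definite d×d matrix. Define f_λ(b) = 1 + n^{−1} tr(Σ (Σ/b + λI)^{−1}). Then f_λ has a unique fixed point b* on [1, ∞), and for λ = 0 (when d < n), the fixed point of f₀(b) = 1 + b·d/n is b* = (1 − d/n)^{−1}. -/

import Mathlib

open Matrix

section aux

variable {d : ℕ}

private lemma psd_smul {c : ℝ} (hc : 0 ≤ c) {A : Matrix (Fin d) (Fin d) ℝ}
    (hA : A.PosSemidef) : (c • A).PosSemidef := by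
  refine ⟨?_, fun x => ?_⟩
  · rw [Matrix.IsHermitian, conjTranspose_smul, star_trivial, hA.1]
  · have h := hA.2 x
    simpa [Finsupp.mul_sum, mul_assoc, mul_left_comm] using mul_nonneg hc h

private lemma psd_trace_nonneg {A : Matrix (Fin d) (Fin d) ℝ} (hA : A.PosSemidef) :
    0 ≤ A.trace := by
  rw [Matrix.trace]
  refine Finset.sum_nonneg fun i _ => ?_
  exact hA.diag_nonneg

open scoped MatrixOrder in
private lemma trace_mul_psd_nonneg {A B : Matrix (Fin d) (Fin d) ℝ}
    (hA : A.PosSemidef) (hB : B.PosSemidef) : 0 ≤ (A * B).trace := by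
  have h1 : A * B = CFC.sqrt A * CFC.sqrt A * B := by rw [CFC.sqrt_mul_sqrt_self A hA.nonneg]
  rw [h1, ← Matrix.trace_mul_cycle]
  have hpsd : (CFC.sqrt A * B * CFC.sqrt A).PosSemidef := by
    have := hB.conjTranspose_mul_mul_same (CFC.sqrt A)
    rwa [(CFC.sqrt_nonneg A).posSemidef.1] at this
  exact psd_trace_nonneg hpsd

private lemma Mc_posdef {Sg : Matrix (Fin d) (Fin d) ℝ} (hSg : Sg.PosDef) {c : ℝ} (hc : 0 ≤ c) :
    (Sg + c • (1 : Matrix (Fin d) (Fin d) ℝ)).PosDef :=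
  hSg.add_posSemidef (psd_smul hc Matrix.PosSemidef.one)

private lemma T_mono {Sg : Matrix (Fin d) (Fin d) ℝ} (hSg : Sg.PosDef) {c₁ c₂ : ℝ}
    (h0 : 0 ≤ c₁) (h : c₁ ≤ c₂) :
    (Sg * (Sg + c₂ • (1 : Matrix (Fin d) (Fin d) ℝ))⁻¹).trace ≤
      (Sg * (Sg + c₁ • (1 : Matrix (Fin d) (Fin d) ℝ))⁻¹).trace := by
  set A := Sg + c₁ • (1 : Matrix (Fin d) (Fin d) ℝ) with hAdef
  set B := Sg + c₂ • (1 : Matrix (Fin d) (Fin d) ℝ) with hBdef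
  have hA : A.PosDef := Mc_posdef hSg h0
  have hB : B.PosDef := Mc_posdef hSg (h0.trans h)
  have hAd : IsUnit A.det := hA.det_pos.ne'.isUnit
  have hBd : IsUnit B.det := hB.det_pos.ne'.isUnit
  have e1 : A⁻¹ * (B - A) * B⁻¹ = A⁻¹ - B⁻¹ := by
    rw [mul_sub, sub_mul, mul_assoc, Matrix.mul_nonsing_inv _ hBd, mul_one,
      Matrix.nonsing_inv_mul _ hAd, one_mul]
  have e2 : B - A = (c₂ - c₁) • (1 : Matrix (Fin d) (Fin d) ℝ) := by
    rw [hAdef, hBdef, sub_smul]; abel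
  have key : A⁻¹ - B⁻¹ = (c₂ - c₁) • (B * A)⁻¹ := by
    rw [← e1, e2, Matrix.mul_inv_rev]
    rw [mul_smul_comm, mul_one, smul_mul_assoc]
  have hBA : (B * A).PosSemidef := by
    have hSS : (Sg * Sg).PosSemidef := by
      have := Matrix.posSemidef_conjTranspose_mul_self Sg
      rwa [hSg.1.eq] at this
    have hexp : B * A = Sg * Sg + (c₁ • Sg + (c₂ • Sg + (c₁ * c₂) • (1 : Matrix (Fin d) (Fin d) ℝ))) := by
      rw [hAdef, hBdef]
      simp [add_mul, mul_add, Matrix.smul_mul, Matrix.mul_smul, smul_smul]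
      abel
    rw [hexp]
    exact hSS.add ((psd_smul h0 hSg.posSemidef).add
      ((psd_smul (h0.trans h) hSg.posSemidef).add
        (psd_smul (mul_nonneg h0 (h0.trans h)) Matrix.PosSemidef.one)))
  have hinv : ((c₂ - c₁) • (B * A)⁻¹).PosSemidef := psd_smul (sub_nonneg.2 h) hBA.inv
  have h0' : 0 ≤ (Sg * A⁻¹).trace - (Sg * B⁻¹).trace := by
    rw [← Matrix.trace_sub, ← mul_sub, key]
    exact trace_mul_psd_nonneg hSg.posSemidef hinv
  linarith

end aux

/-- The self-consistent equation `b = f_λ(b) = 1 + n⁻¹ tr(Σ(Σ/b + λI)⁻¹)` has a unique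
solution on `[1, ∞)`, and for `λ = 0` (with `d < n`) the fixed point is `(1 − d/n)⁻¹`. -/
theorem fixed_point_self_consistent {d n : ℕ} (hdn : d < n)
    (Sg : Matrix (Fin d) (Fin d) ℝ) (hSg : Sg.PosDef) (lam : ℝ) (hlam : 0 ≤ lam) :
    (∃! b : ℝ, b ∈ Set.Ici (1 : ℝ) ∧
        1 + (n : ℝ)⁻¹ *
            Matrix.trace (Sg * (b⁻¹ • Sg + lam • (1 : Matrix (Fin d) (Fin d) ℝ))⁻¹) = b) ∧
      (∀ b : ℝ, 1 ≤ b →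
        (1 + (n : ℝ)⁻¹ *
            Matrix.trace (Sg * (b⁻¹ • Sg + (0 : ℝ) • (1 : Matrix (Fin d) (Fin d) ℝ))⁻¹) = b
          ↔ b = (1 - (d : ℝ) / n)⁻¹)) := by
  have hn : (0 : ℝ) < n := by exact_mod_cast lt_of_le_of_lt (Nat.zero_le d) hdn
  have hdln : (d : ℝ) / n < 1 := (div_lt_one hn).2 (by exact_mod_cast hdn)
  have hc : 0 < 1 - (d : ℝ) / n := by linarith
  set T : ℝ → ℝ := fun c => (Sg * (Sg + c • (1 : Matrix (Fin d) (Fin d) ℝ))⁻¹).trace with hT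
  -- T 0 = d
  have hT0 : T 0 = d := by
    have : Sg + (0 : ℝ) • (1 : Matrix (Fin d) (Fin d) ℝ) = Sg := by
      rw [zero_smul, add_zero]
    rw [hT]
    simp only [this]
    rw [Matrix.mul_nonsing_inv _ hSg.det_pos.ne'.isUnit, Matrix.trace_one]
    simp
  have hTnonneg : ∀ c, 0 ≤ c → 0 ≤ T c := fun c hcc =>
    trace_mul_psd_nonneg hSg.posSemidef (Mc_posdef hSg hcc).inv.posSemidef
  have hTled : ∀ c, 0 ≤ c → T c ≤ d := fun c hcc => by
    have h2 : T c ≤ T 0 := T_mono hSg le_rfl hcc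
    exact le_trans h2 (le_of_eq hT0)
  -- the reformulation
  have main : ∀ l : ℝ, 0 ≤ l → ∀ b : ℝ, 1 ≤ b →
      ((1 + (n : ℝ)⁻¹ *
          Matrix.trace (Sg * (b⁻¹ • Sg + l • (1 : Matrix (Fin d) (Fin d) ℝ))⁻¹) = b) ↔
        b⁻¹ + (n : ℝ)⁻¹ * T (l * b) = 1) := by
    intro l hl b hb
    have hbpos : (0 : ℝ) < b := lt_of_lt_of_le one_pos hb
    have hb0 : b ≠ 0 := hbpos.ne'
    have e1 : b⁻¹ • Sg + l • (1 : Matrix (Fin d) (Fin d) ℝ) =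
        b⁻¹ • (Sg + (l * b) • (1 : Matrix (Fin d) (Fin d) ℝ)) := by
      rw [smul_add, smul_smul]
      congr 2
      field_simp
    have hMl : (Sg + (l * b) • (1 : Matrix (Fin d) (Fin d) ℝ)).PosDef :=
      Mc_posdef hSg (mul_nonneg hl hbpos.le)
    have hdet : IsUnit (Sg + (l * b) • (1 : Matrix (Fin d) (Fin d) ℝ)).det :=
      hMl.det_pos.ne'.isUnit
    have e2 : (b⁻¹ • (Sg + (l * b) • (1 : Matrix (Fin d) (Fin d) ℝ)))⁻¹ =
        b • (Sg + (l * b) • (1 : Matrix (Fin d) (Fin d) ℝ))⁻¹ := by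
      letI : Invertible (b⁻¹) := invertibleOfNonzero (inv_ne_zero hb0)
      rw [Matrix.inv_smul _ _ hdet, invOf_eq_inv _, inv_inv]
    have e3 : (Sg * (b • (Sg + (l * b) • (1 : Matrix (Fin d) (Fin d) ℝ))⁻¹)).trace
        = b * T (l * b) := by
      rw [mul_smul_comm, Matrix.trace_smul, smul_eq_mul, hT]
    rw [e1, e2, e3]
    constructor
    · intro h
      field_simp at h ⊢
      linear_combination h
    · intro h
      field_simp at h ⊢
      linear_combination h
  set F : ℝ → ℝ := fun b => b⁻¹ + (n : ℝ)⁻¹ * T (lam * b) with hF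
  have hninv : (0 : ℝ) ≤ (n : ℝ)⁻¹ := inv_nonneg.2 hn.le
  -- strict antitonicity
  have Fanti : StrictAntiOn F (Set.Ici (1 : ℝ)) := by
    intro b₁ h₁ b₂ h₂ hlt
    have hb₁ : (0 : ℝ) < b₁ := lt_of_lt_of_le one_pos h₁
    have hinv : b₂⁻¹ < b₁⁻¹ := by
      apply inv_strictAnti₀ hb₁ hlt
    have hTle : T (lam * b₂) ≤ T (lam * b₁) := by
      rcases eq_or_lt_of_le hlam with h0 | h0
      · rw [← h0]; simp
      · exact T_mono hSg (mul_nonneg hlam hb₁.le)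
          (by nlinarith)
    exact add_lt_add_of_lt_of_le hinv (mul_le_mul_of_nonneg_left hTle hninv)
  -- continuity
  have Fcont : ContinuousOn F (Set.Ici (1 : ℝ)) := by
    have hmat : Continuous fun b : ℝ => Sg + (lam * b) • (1 : Matrix (Fin d) (Fin d) ℝ) :=
      continuous_const.add ((continuous_const.mul continuous_id).smul continuous_const)
    have hdetc : Continuous fun b : ℝ =>
        (Sg + (lam * b) • (1 : Matrix (Fin d) (Fin d) ℝ)).det := hmat.matrix_det
    have hadjc : Continuous fun b : ℝ =>
        (Sg * (Sg + (lam * b) • (1 : Matrix (Fin d) (Fin d) ℝ)).adjugate).trace :=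
      (continuous_const.matrix_mul hmat.matrix_adjugate).matrix_trace
    have hne : ∀ b ∈ Set.Ici (1 : ℝ),
        (Sg + (lam * b) • (1 : Matrix (Fin d) (Fin d) ℝ)).det ≠ 0 := fun b hb =>
      (Mc_posdef hSg (mul_nonneg hlam (le_trans zero_le_one hb))).det_pos.ne'
    have h2 : ContinuousOn (fun b : ℝ =>
        b⁻¹ + (n : ℝ)⁻¹ * ((Sg + (lam * b) • (1 : Matrix (Fin d) (Fin d) ℝ)).det⁻¹ *
          (Sg * (Sg + (lam * b) • (1 : Matrix (Fin d) (Fin d) ℝ)).adjugate).trace))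
        (Set.Ici (1 : ℝ)) := by
      refine ContinuousOn.add ?_ (continuousOn_const.mul
        ((hdetc.continuousOn.inv₀ hne).mul hadjc.continuousOn))
      exact ContinuousOn.inv₀ continuousOn_id fun b hb => (lt_of_lt_of_le one_pos hb).ne'
    have hTeq : ∀ b : ℝ, T (lam * b) =
        (Sg + (lam * b) • (1 : Matrix (Fin d) (Fin d) ℝ)).det⁻¹ *
          (Sg * (Sg + (lam * b) • (1 : Matrix (Fin d) (Fin d) ℝ)).adjugate).trace := by
      intro b
      show (Sg * (Sg + (lam * b) • (1 : Matrix (Fin d) (Fin d) ℝ))⁻¹).trace = _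
      rw [Matrix.inv_def, Ring.inverse_eq_inv', mul_smul_comm, Matrix.trace_smul, smul_eq_mul]
    refine h2.congr fun b hb => ?_
    show b⁻¹ + (n : ℝ)⁻¹ * T (lam * b) = _
    rw [hTeq b]
  -- endpoints
  set Bb : ℝ := (1 - (d : ℝ) / n)⁻¹ with hBb
  have hBpos : 0 < Bb := inv_pos.2 hc
  have hB1 : (1 : ℝ) ≤ Bb := by
    rw [hBb]
    refine (one_le_inv₀ hc).2 ?_
    have hdn0 : (0:ℝ) ≤ (d:ℝ)/n := by positivity
    linarith
  have hF1 : (1 : ℝ) ≤ F 1 := by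
    show (1 : ℝ) ≤ (1 : ℝ)⁻¹ + (n : ℝ)⁻¹ * T (lam * 1)
    have h := hTnonneg (lam * 1) (by simpa using hlam)
    have := mul_nonneg hninv h
    rw [inv_one]
    linarith
  have hFB : F Bb ≤ 1 := by
    show Bb⁻¹ + (n : ℝ)⁻¹ * T (lam * Bb) ≤ 1
    have h1 : Bb⁻¹ = 1 - (d : ℝ) / n := by rw [hBb, inv_inv]
    have h2 : T (lam * Bb) ≤ d := hTled _ (mul_nonneg hlam hBpos.le)
    have h4 : (n : ℝ)⁻¹ * T (lam * Bb) ≤ (d : ℝ) / n := by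
      rw [div_eq_mul_inv, mul_comm ((n:ℝ)⁻¹)]
      exact mul_le_mul_of_nonneg_right h2 hninv
    rw [h1]
    linarith
  -- existence via IVT
  have hIcc : ContinuousOn F (Set.Icc (1 : ℝ) Bb) := Fcont.mono (Set.Icc_subset_Ici_self)
  have hmem : (1 : ℝ) ∈ Set.Icc (F Bb) (F 1) := ⟨hFB, hF1⟩
  obtain ⟨b₀, hb₀mem, hFb₀⟩ := intermediate_value_Icc' hB1 hIcc hmem
  have hb₀1 : (1 : ℝ) ≤ b₀ := hb₀mem.1
  constructor
  · refine ⟨b₀, ⟨hb₀1, (main lam hlam b₀ hb₀1).2 hFb₀⟩, ?_⟩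
    rintro b' ⟨hb', heq⟩
    have h1 : F b' = 1 := (main lam hlam b' hb').1 heq
    exact Fanti.injOn hb' hb₀1 (h1.trans hFb₀.symm)
  · intro b hb
    rw [main 0 le_rfl b hb, zero_mul, hT0]
    have hiff : (b⁻¹ + (n : ℝ)⁻¹ * (d : ℝ) = 1) ↔ b⁻¹ = 1 - (d : ℝ) / n := by
      rw [div_eq_mul_inv, mul_comm ((d : ℝ))]
      constructor <;> intro h <;> linarith
    rw [hiff, inv_eq_iff_eq_inv]
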